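/- Let Y ∈ ℝ^{n₁×n₂} have singular value decomposition Y = UΣVᵀ with Σ = diag[σ₁, σ₂, …], and let τ > 0. Then the function Z ↦ (1/2)‖Y − Z‖_F² + τ‖Z‖_* has a unique minimizer over ℝ^{n₁×n₂}, given by the singular value thresholding operator D_τ(Y) = UΣ'Vᵀ, where Σ' = diag[σ'₁, σ'₂, …] with σ'_k = σ_k − τ if σ_k ≥ τ and σ'_k = 0 if σ_k < τ. -/

import Mathlib

open Matrix

noncomputable def frobNorm {n₁ n₂ : ℕ} (A : Matrix (Fin n₁) (Fin n₂) ℝ) : ℝ :=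
  Real.sqrt (∑ i, ∑ j, (A i j) ^ 2)

noncomputable def nuclearNorm {n₁ n₂ : ℕ} (A : Matrix (Fin n₁) (Fin n₂) ℝ) : ℝ :=
  ∑ i, Real.sqrt ((Matrix.isHermitian_conjTranspose_mul_self A).eigenvalues i)

namespace SVTAux

variable {m n r : ℕ}

lemma dot_nonneg (v : Fin m → ℝ) : 0 ≤ v ⬝ᵥ v :=
  Finset.sum_nonneg fun _ _ => mul_self_nonneg _

lemma dot_cs_sq (a b : Fin m → ℝ) : (a ⬝ᵥ b) ^ 2 ≤ (a ⬝ᵥ a) * (b ⬝ᵥ b) := by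
  have := Finset.sum_mul_sq_le_sq_mul_sq Finset.univ a b
  simpa [dotProduct, pow_two] using this

lemma dot_cs (a b : Fin m → ℝ) :
    a ⬝ᵥ b ≤ Real.sqrt (a ⬝ᵥ a) * Real.sqrt (b ⬝ᵥ b) := by
  have := Real.sum_mul_le_sqrt_mul_sqrt Finset.univ a b
  simpa [dotProduct, pow_two] using this

lemma dot_adj (A : Matrix (Fin m) (Fin n) ℝ) (x : Fin n → ℝ) (y : Fin m → ℝ) :
    (A *ᵥ x) ⬝ᵥ y = x ⬝ᵥ (Aᵀ *ᵥ y) := by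
  rw [dotProduct_comm, dotProduct_mulVec, ← mulVec_transpose]
  exact dotProduct_comm _ _

lemma dot_iso {A : Matrix (Fin m) (Fin n) ℝ} (hA : Aᵀ * A = 1) (x : Fin n → ℝ) :
    (A *ᵥ x) ⬝ᵥ (A *ᵥ x) = x ⬝ᵥ x := by
  rw [dot_adj, mulVec_mulVec, hA, one_mulVec]

lemma dot_contract' {A : Matrix (Fin m) (Fin n) ℝ}
    (h : ∀ v : Fin n → ℝ, (A *ᵥ v) ⬝ᵥ (A *ᵥ v) ≤ v ⬝ᵥ v) (y : Fin m → ℝ) :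
    (Aᵀ *ᵥ y) ⬝ᵥ (Aᵀ *ᵥ y) ≤ y ⬝ᵥ y := by
  set s := Aᵀ *ᵥ y with hs
  have h1 : s ⬝ᵥ s = y ⬝ᵥ (A *ᵥ s) := by
    rw [hs]
    nth_rewrite 1 [dot_adj Aᵀ y s]
    rw [transpose_transpose, dotProduct_comm]
  have h2 : (y ⬝ᵥ (A *ᵥ s)) ^ 2 ≤ (y ⬝ᵥ y) * (s ⬝ᵥ s) :=
    le_trans (dot_cs_sq y (A *ᵥ s))
      (mul_le_mul_of_nonneg_left (h s) (dot_nonneg y))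
  have h3 : (s ⬝ᵥ s) ^ 2 ≤ (y ⬝ᵥ y) * (s ⬝ᵥ s) := by
    nth_rewrite 1 [h1]; exact h2
  nlinarith [dot_nonneg s, dot_nonneg y]

lemma dot_contract {A : Matrix (Fin m) (Fin n) ℝ} (hA : Aᵀ * A = 1) (y : Fin m → ℝ) :
    (Aᵀ *ᵥ y) ⬝ᵥ (Aᵀ *ᵥ y) ≤ y ⬝ᵥ y :=
  dot_contract' (fun v => le_of_eq (dot_iso hA v)) y

/-- bound on `‖(U diag d Vᵀ) x‖²`. -/
lemma mulVec_sq_le {U : Matrix (Fin m) (Fin r) ℝ} {V : Matrix (Fin n) (Fin r) ℝ}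
    (hU : Uᵀ * U = 1) (hV : Vᵀ * V = 1) (d : Fin r → ℝ) (τ : ℝ)
    (hd : ∀ i, |d i| ≤ τ) (x : Fin n → ℝ) :
    ((U * diagonal d * Vᵀ) *ᵥ x) ⬝ᵥ ((U * diagonal d * Vᵀ) *ᵥ x) ≤ τ ^ 2 * (x ⬝ᵥ x) := by
  have hrw : (U * diagonal d * Vᵀ) *ᵥ x = U *ᵥ (diagonal d *ᵥ (Vᵀ *ᵥ x)) := by
    rw [mulVec_mulVec, mulVec_mulVec]
  rw [hrw, dot_iso hU]
  set s := Vᵀ *ᵥ x with hsdef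
  have h1 : (diagonal d *ᵥ s) ⬝ᵥ (diagonal d *ᵥ s) ≤ τ ^ 2 * (s ⬝ᵥ s) := by
    simp only [dotProduct, mulVec_diagonal, Finset.mul_sum]
    refine Finset.sum_le_sum fun i _ => ?_
    have h0 : 0 ≤ τ := le_trans (abs_nonneg _) (hd i)
    have habs := abs_le.mp (hd i)
    have hd2 : d i ^ 2 ≤ τ ^ 2 := sq_le_sq' (by linarith [habs.1]) habs.2
    nlinarith [mul_nonneg (sub_nonneg.mpr hd2) (mul_self_nonneg (s i))]
  exact le_trans h1 (mul_le_mul_of_nonneg_left (dot_contract hV x) (sq_nonneg τ))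

lemma inner_eq_trace (A B : Matrix (Fin m) (Fin n) ℝ) :
    ∑ i, ∑ j, A i j * B i j = Matrix.trace (Aᵀ * B) := by
  simp only [Matrix.trace, Matrix.diag, Matrix.mul_apply, Matrix.transpose_apply]
  rw [Finset.sum_comm]

/-- expand the Frobenius inner product along an orthogonal family of columns. -/
lemma trace_expand (A B : Matrix (Fin m) (Fin n) ℝ) {Q : Matrix (Fin n) (Fin n) ℝ}
    (hQ : Q * Qᵀ = 1) :
    ∑ i, ∑ j, A i j * B i j
      = ∑ p : Fin n, (A *ᵥ (fun x => Q x p)) ⬝ᵥ (B *ᵥ (fun x => Q x p)) := by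
  have step : ∀ p : Fin n,
      (A *ᵥ (fun x => Q x p)) ⬝ᵥ (B *ᵥ (fun x => Q x p))
        = (Qᵀ * (Aᵀ * B) * Q) p p := by
    intro p
    rw [dot_adj, mulVec_mulVec]
    simp only [dotProduct, Matrix.mul_apply, Matrix.mulVec, Matrix.transpose_apply,
      dotProduct, Finset.sum_mul, Finset.mul_sum]
    rw [Finset.sum_comm]
    refine Finset.sum_congr rfl fun i _ => Finset.sum_congr rfl fun j _ =>
      Finset.sum_congr rfl fun x _ => by ring
  rw [inner_eq_trace]
  calc Matrix.trace (Aᵀ * B)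
      = Matrix.trace (Aᵀ * B * (Q * Qᵀ)) := by rw [hQ, Matrix.mul_one]
    _ = Matrix.trace (Qᵀ * (Aᵀ * B) * Q) := by
        rw [← Matrix.mul_assoc, Matrix.trace_mul_comm (Aᵀ * B * Q) Qᵀ, ← Matrix.mul_assoc]
    _ = ∑ p, (Qᵀ * (Aᵀ * B) * Q) p p := rfl
    _ = _ := by
        refine Finset.sum_congr rfl fun p _ => (step p).symm

end SVTAux

open SVTAux in
/-- duality: `⟨W, Z⟩ ≤ τ ‖Z‖_*` whenever `‖W x‖ ≤ τ ‖x‖`. -/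
lemma inner_le_nuclear {m n : ℕ} (W Z : Matrix (Fin m) (Fin n) ℝ) (τ : ℝ) (hτ : 0 ≤ τ)
    (hW : ∀ x : Fin n → ℝ, (W *ᵥ x) ⬝ᵥ (W *ᵥ x) ≤ τ ^ 2 * (x ⬝ᵥ x)) :
    ∑ i, ∑ j, W i j * Z i j ≤ τ * nuclearNorm Z := by
  classical
  set hH := Matrix.isHermitian_conjTranspose_mul_self Z with hHdef
  set Q : Matrix (Fin n) (Fin n) ℝ := (hH.eigenvectorUnitary : Matrix (Fin n) (Fin n) ℝ)
    with hQdef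
  have hstar : star Q = Qᵀ := by
    rw [Matrix.star_eq_conjTranspose, Matrix.conjTranspose_eq_transpose_of_trivial]
  have hQ1 : Q * Qᵀ = 1 := by
    rw [← hstar]; exact Matrix.mem_unitaryGroup_iff.mp hH.eigenvectorUnitary.2
  have hQ2 : Qᵀ * Q = 1 := by
    rw [← hstar]; exact Matrix.mem_unitaryGroup_iff'.mp hH.eigenvectorUnitary.2
  set q : Fin n → (Fin n → ℝ) := fun p => (fun x => Q x p) with hqdef
  have horth : ∀ p p', q p ⬝ᵥ q p' = (1 : Matrix (Fin n) (Fin n) ℝ) p p' := by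
    intro p p'
    rw [← hQ2]
    simp [Matrix.mul_apply, dotProduct, hqdef]
  have heig : ∀ p, (Zᵀ * Z) *ᵥ q p = hH.eigenvalues p • q p := by
    intro p
    have h1 : q p = ⇑(hH.eigenvectorBasis p) := by
      funext x
      exact (Matrix.IsHermitian.eigenvectorUnitary_apply hH x p).symm
    have := hH.mulVec_eigenvectorBasis p
    rw [h1]
    have hZc : Zᴴ = Zᵀ := Matrix.conjTranspose_eq_transpose_of_trivial Z
    rw [← hZc]
    exact this
  have hZq : ∀ p, (Z *ᵥ q p) ⬝ᵥ (Z *ᵥ q p) = hH.eigenvalues p := by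
    intro p
    rw [dot_adj, mulVec_mulVec, heig p]
    have : q p ⬝ᵥ (hH.eigenvalues p • q p) = hH.eigenvalues p * (q p ⬝ᵥ q p) := by
      simp [dotProduct, Finset.mul_sum]; ring_nf
      exact Finset.sum_congr rfl fun x _ => by ring
    rw [this, horth p p, Matrix.one_apply_eq, mul_one]
  have hexp := trace_expand W Z hQ1
  rw [hexp]
  have hnuc : nuclearNorm Z = ∑ p, Real.sqrt (hH.eigenvalues p) := rfl
  rw [hnuc, Finset.mul_sum]
  refine Finset.sum_le_sum fun p _ => ?_
  have h1 : (W *ᵥ q p) ⬝ᵥ (Z *ᵥ q p)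
      ≤ Real.sqrt ((W *ᵥ q p) ⬝ᵥ (W *ᵥ q p)) * Real.sqrt ((Z *ᵥ q p) ⬝ᵥ (Z *ᵥ q p)) :=
    dot_cs _ _
  have h2 : Real.sqrt ((W *ᵥ q p) ⬝ᵥ (W *ᵥ q p)) ≤ τ := by
    have hq1 : q p ⬝ᵥ q p = 1 := by rw [horth p p, Matrix.one_apply_eq]
    have := hW (q p)
    rw [hq1, mul_one] at this
    calc Real.sqrt ((W *ᵥ q p) ⬝ᵥ (W *ᵥ q p)) ≤ Real.sqrt (τ ^ 2) :=
          Real.sqrt_le_sqrt this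
      _ = τ := by rw [Real.sqrt_sq hτ]
  calc (W *ᵥ q p) ⬝ᵥ (Z *ᵥ q p)
      ≤ Real.sqrt ((W *ᵥ q p) ⬝ᵥ (W *ᵥ q p)) * Real.sqrt ((Z *ᵥ q p) ⬝ᵥ (Z *ᵥ q p)) := h1
    _ ≤ τ * Real.sqrt ((Z *ᵥ q p) ⬝ᵥ (Z *ᵥ q p)) :=
        mul_le_mul_of_nonneg_right h2 (Real.sqrt_nonneg _)
    _ = τ * Real.sqrt (hH.eigenvalues p) := by rw [hZq p]

open SVTAux in
/-- `‖U diag d Vᵀ‖_* ≤ ∑ d` for `d ≥ 0`. -/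
lemma nuclear_le_sum {m n r : ℕ} {U : Matrix (Fin m) (Fin r) ℝ} {V : Matrix (Fin n) (Fin r) ℝ}
    (hU : Uᵀ * U = 1) (hV : Vᵀ * V = 1) (d : Fin r → ℝ) (hd : ∀ i, 0 ≤ d i) :
    nuclearNorm (U * diagonal d * Vᵀ) ≤ ∑ i, d i := by
  classical
  set D : Matrix (Fin m) (Fin n) ℝ := U * diagonal d * Vᵀ with hD
  set hH := Matrix.isHermitian_conjTranspose_mul_self D with hHdef
  set Q : Matrix (Fin n) (Fin n) ℝ := (hH.eigenvectorUnitary : Matrix (Fin n) (Fin n) ℝ)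
    with hQdef
  have hstar : star Q = Qᵀ := by
    rw [Matrix.star_eq_conjTranspose, Matrix.conjTranspose_eq_transpose_of_trivial]
  have hQ1 : Q * Qᵀ = 1 := by
    rw [← hstar]; exact Matrix.mem_unitaryGroup_iff.mp hH.eigenvectorUnitary.2
  have hQ2 : Qᵀ * Q = 1 := by
    rw [← hstar]; exact Matrix.mem_unitaryGroup_iff'.mp hH.eigenvectorUnitary.2
  set q : Fin n → (Fin n → ℝ) := fun p => (fun x => Q x p) with hqdef
  have horth : ∀ p p', q p ⬝ᵥ q p' = (1 : Matrix (Fin n) (Fin n) ℝ) p p' := by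
    intro p p'
    rw [← hQ2]
    simp [Matrix.mul_apply, dotProduct, hqdef]
  have heig : ∀ p, (Dᵀ * D) *ᵥ q p = hH.eigenvalues p • q p := by
    intro p
    have h1 : q p = ⇑(hH.eigenvectorBasis p) := by
      funext x
      exact (Matrix.IsHermitian.eigenvectorUnitary_apply hH x p).symm
    have hDc : Dᴴ = Dᵀ := Matrix.conjTranspose_eq_transpose_of_trivial D
    rw [h1, ← hDc]
    exact hH.mulVec_eigenvectorBasis p
  have hDq : ∀ p p', (D *ᵥ q p) ⬝ᵥ (D *ᵥ q p')
      = hH.eigenvalues p' * (1 : Matrix (Fin n) (Fin n) ℝ) p p' := by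
    intro p p'
    rw [dot_adj, mulVec_mulVec, heig p']
    have : q p ⬝ᵥ (hH.eigenvalues p' • q p') = hH.eigenvalues p' * (q p ⬝ᵥ q p') := by
      simp [dotProduct, Finset.mul_sum]
      exact Finset.sum_congr rfl fun x _ => by ring
    rw [this, horth p p']
  -- t p = singular values of D
  set t : Fin n → ℝ := fun p => Real.sqrt ((D *ᵥ q p) ⬝ᵥ (D *ᵥ q p)) with htdef
  have hnuc : nuclearNorm D = ∑ p, t p := by
    show (∑ p, Real.sqrt (hH.eigenvalues p)) = ∑ p, t p
    refine Finset.sum_congr rfl fun p _ => ?_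
    have h := hDq p p
    rw [Matrix.one_apply_eq, mul_one] at h
    show Real.sqrt (hH.eigenvalues p) = Real.sqrt ((D *ᵥ q p) ⬝ᵥ (D *ᵥ q p))
    rw [h]
  -- normalized left singular vectors
  set P : Matrix (Fin m) (Fin n) ℝ :=
    Matrix.of (fun x p => if (D *ᵥ q p) ⬝ᵥ (D *ᵥ q p) = 0 then 0
      else ((t p)⁻¹ • (D *ᵥ q p)) x) with hPdef
  set pv : Fin n → (Fin m → ℝ) := fun p => (fun x => P x p) with hpvdef
  have hpv : ∀ p, pv p = if (D *ᵥ q p) ⬝ᵥ (D *ᵥ q p) = 0 then 0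
      else (t p)⁻¹ • (D *ᵥ q p) := by
    intro p; funext x
    have hx : pv p x
        = if (D *ᵥ q p) ⬝ᵥ (D *ᵥ q p) = 0 then (0 : ℝ) else ((t p)⁻¹ • (D *ᵥ q p)) x := rfl
    rw [hx]
    by_cases h : (D *ᵥ q p) ⬝ᵥ (D *ᵥ q p) = 0
    · rw [if_pos h, if_pos h]; rfl
    · rw [if_neg h, if_neg h]
  have ht_pos : ∀ p, (D *ᵥ q p) ⬝ᵥ (D *ᵥ q p) ≠ 0 → 0 < t p := by
    intro p h
    exact Real.sqrt_pos.mpr (lt_of_le_of_ne (dot_nonneg _) (Ne.symm h))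
  have ht_sq : ∀ p, t p ^ 2 = (D *ᵥ q p) ⬝ᵥ (D *ᵥ q p) := fun p =>
    Real.sq_sqrt (dot_nonneg _)
  have hstep1 : ∀ p, t p = pv p ⬝ᵥ (D *ᵥ q p) := by
    intro p
    by_cases h : (D *ᵥ q p) ⬝ᵥ (D *ᵥ q p) = 0
    · rw [hpv p, if_pos h, zero_dotProduct]
      show Real.sqrt ((D *ᵥ q p) ⬝ᵥ (D *ᵥ q p)) = 0
      rw [h, Real.sqrt_zero]
    · rw [hpv p, if_neg h, smul_dotProduct, smul_eq_mul, ← ht_sq p, pow_two,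
        ← mul_assoc, inv_mul_cancel₀ (ht_pos p h).ne', one_mul]
  have hporth : ∀ p p', p ≠ p' → pv p ⬝ᵥ pv p' = 0 := by
    intro p p' hne
    rw [hpv p, hpv p']
    by_cases h : (D *ᵥ q p) ⬝ᵥ (D *ᵥ q p) = 0
    · rw [if_pos h, zero_dotProduct]
    by_cases h' : (D *ᵥ q p') ⬝ᵥ (D *ᵥ q p') = 0
    · rw [if_neg h, if_pos h', dotProduct_zero]
    rw [if_neg h, if_neg h', smul_dotProduct, dotProduct_smul, hDq p p',
      Matrix.one_apply_ne hne, mul_zero, smul_zero, smul_zero]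
  have hpdiag : ∀ p, pv p ⬝ᵥ pv p ≤ 1 := by
    intro p
    rw [hpv p]
    by_cases h : (D *ᵥ q p) ⬝ᵥ (D *ᵥ q p) = 0
    · rw [if_pos h, zero_dotProduct]; norm_num
    · rw [if_neg h, smul_dotProduct, dotProduct_smul, smul_eq_mul, smul_eq_mul]
      have h4 : (t p)⁻¹ * ((t p)⁻¹ * ((D *ᵥ q p) ⬝ᵥ (D *ᵥ q p))) = 1 := by
        rw [← ht_sq p, pow_two]
        field_simp
        rw [div_self (ht_pos p h).ne']
      rw [h4]
  have hPtP : Pᵀ * P = diagonal (fun p => pv p ⬝ᵥ pv p) := by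
    ext p p'
    by_cases hne : p = p'
    · subst hne
      simp only [Matrix.mul_apply, Matrix.transpose_apply, Matrix.diagonal_apply_eq]
      simp [dotProduct, hpvdef]
    · rw [Matrix.diagonal_apply_ne _ hne]
      have := hporth p p' hne
      simp only [Matrix.mul_apply, Matrix.transpose_apply]
      simpa [dotProduct, hpvdef] using this
  have hPcontr : ∀ v : Fin n → ℝ, (P *ᵥ v) ⬝ᵥ (P *ᵥ v) ≤ v ⬝ᵥ v := by
    intro v
    rw [dot_adj, mulVec_mulVec, hPtP]
    have : v ⬝ᵥ (diagonal (fun p => pv p ⬝ᵥ pv p) *ᵥ v)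
        = ∑ p, (pv p ⬝ᵥ pv p) * (v p * v p) := by
      simp [dotProduct, mulVec_diagonal]
      exact Finset.sum_congr rfl fun x _ => by ring
    rw [this]
    calc (∑ p, (pv p ⬝ᵥ pv p) * (v p * v p)) ≤ ∑ p, v p * v p := by
          refine Finset.sum_le_sum fun p _ => ?_
          nlinarith [hpdiag p, dot_nonneg (pv p), mul_self_nonneg (v p)]
      _ = v ⬝ᵥ v := rfl
  -- Bessel for columns of U and exact for columns of V
  have hbesselU : ∀ j : Fin r, (∑ p, ((Uᵀ *ᵥ pv p) j) ^ 2) ≤ 1 := by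
    intro j
    set u : Fin m → ℝ := fun x => U x j with hudef
    have huu : u ⬝ᵥ u = 1 := by
      have : (Uᵀ * U) j j = (1 : Matrix (Fin r) (Fin r) ℝ) j j := by rw [hU]
      rw [Matrix.one_apply_eq] at this
      rw [← this]
      simp [Matrix.mul_apply, dotProduct, hudef]
    have hrw : ∀ p, (Uᵀ *ᵥ pv p) j = (Pᵀ *ᵥ u) p := by
      intro p
      simp [Matrix.mulVec, dotProduct, hudef, hpvdef, Matrix.transpose_apply]
      exact Finset.sum_congr rfl fun x _ => by ring
    calc (∑ p, ((Uᵀ *ᵥ pv p) j) ^ 2) = ∑ p, (Pᵀ *ᵥ u) p * (Pᵀ *ᵥ u) p := by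
          refine Finset.sum_congr rfl fun p _ => by rw [hrw p, pow_two]
      _ = (Pᵀ *ᵥ u) ⬝ᵥ (Pᵀ *ᵥ u) := rfl
      _ ≤ u ⬝ᵥ u := dot_contract' hPcontr u
      _ = 1 := huu
  have hexactV : ∀ j : Fin r, (∑ p, ((Vᵀ *ᵥ q p) j) ^ 2) = 1 := by
    intro j
    set v : Fin n → ℝ := fun x => V x j with hvdef
    have hvv : v ⬝ᵥ v = 1 := by
      have : (Vᵀ * V) j j = (1 : Matrix (Fin r) (Fin r) ℝ) j j := by rw [hV]
      rw [Matrix.one_apply_eq] at this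
      rw [← this]
      simp [Matrix.mul_apply, dotProduct, hvdef]
    have hrw : ∀ p, (Vᵀ *ᵥ q p) j = (Qᵀ *ᵥ v) p := by
      intro p
      simp [Matrix.mulVec, dotProduct, hvdef, hqdef, Matrix.transpose_apply]
      exact Finset.sum_congr rfl fun x _ => by ring
    have hiso : (Qᵀ *ᵥ v) ⬝ᵥ (Qᵀ *ᵥ v) = v ⬝ᵥ v := by
      have : Qᵀᵀ * Qᵀ = 1 := by rw [transpose_transpose]; exact hQ1
      exact dot_iso this v
    calc (∑ p, ((Vᵀ *ᵥ q p) j) ^ 2) = ∑ p, (Qᵀ *ᵥ v) p * (Qᵀ *ᵥ v) p := by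
          refine Finset.sum_congr rfl fun p _ => by rw [hrw p, pow_two]
      _ = (Qᵀ *ᵥ v) ⬝ᵥ (Qᵀ *ᵥ v) := rfl
      _ = v ⬝ᵥ v := hiso
      _ = 1 := hvv
  -- main computation
  rw [hnuc]
  have hmain : ∀ p, t p = ∑ j, d j * ((Uᵀ *ᵥ pv p) j * (Vᵀ *ᵥ q p) j) := by
    intro p
    rw [hstep1 p]
    have hDrw : D *ᵥ q p = U *ᵥ (diagonal d *ᵥ (Vᵀ *ᵥ q p)) := by
      rw [mulVec_mulVec, mulVec_mulVec, hD]
    rw [hDrw]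
    have : pv p ⬝ᵥ (U *ᵥ (diagonal d *ᵥ (Vᵀ *ᵥ q p)))
        = (Uᵀ *ᵥ pv p) ⬝ᵥ (diagonal d *ᵥ (Vᵀ *ᵥ q p)) := by
      rw [dotProduct_comm, dot_adj, dotProduct_comm]
    rw [this, dotProduct]
    refine Finset.sum_congr rfl fun j _ => ?_
    rw [mulVec_diagonal]
    ring
  calc (∑ p, t p) = ∑ p, ∑ j, d j * ((Uᵀ *ᵥ pv p) j * (Vᵀ *ᵥ q p) j) :=
        Finset.sum_congr rfl fun p _ => hmain p
    _ = ∑ j, d j * (∑ p, (Uᵀ *ᵥ pv p) j * (Vᵀ *ᵥ q p) j) := by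
        rw [Finset.sum_comm]
        exact Finset.sum_congr rfl fun j _ => by rw [Finset.mul_sum]
    _ ≤ ∑ j, d j * 1 := by
        refine Finset.sum_le_sum fun j _ => ?_
        refine mul_le_mul_of_nonneg_left ?_ (hd j)
        have hcs := Real.sum_mul_le_sqrt_mul_sqrt Finset.univ
          (fun p => (Uᵀ *ᵥ pv p) j) (fun p => (Vᵀ *ᵥ q p) j)
        calc (∑ p, (Uᵀ *ᵥ pv p) j * (Vᵀ *ᵥ q p) j)
            ≤ Real.sqrt (∑ p, ((Uᵀ *ᵥ pv p) j) ^ 2)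
              * Real.sqrt (∑ p, ((Vᵀ *ᵥ q p) j) ^ 2) := hcs
          _ ≤ Real.sqrt 1 * Real.sqrt 1 := by
              refine mul_le_mul (Real.sqrt_le_sqrt (hbesselU j)) ?_
                (Real.sqrt_nonneg _) (Real.sqrt_nonneg _)
              rw [hexactV j]
          _ = 1 := by rw [Real.sqrt_one, mul_one]
    _ = ∑ j, d j := by simp

open SVTAux in
lemma inner_UDV {m n r : ℕ} {U : Matrix (Fin m) (Fin r) ℝ} {V : Matrix (Fin n) (Fin r) ℝ}
    (hU : Uᵀ * U = 1) (hV : Vᵀ * V = 1) (c e : Fin r → ℝ) :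
    ∑ i, ∑ j, (U * diagonal c * Vᵀ) i j * (U * diagonal e * Vᵀ) i j = ∑ i, c i * e i := by
  rw [inner_eq_trace]
  have h1 : (U * diagonal c * Vᵀ)ᵀ * (U * diagonal e * Vᵀ)
      = V * (diagonal (fun i => c i * e i) * Vᵀ) := by
    have hUX : ∀ (X : Matrix (Fin r) (Fin n) ℝ), Uᵀ * (U * X) = X := by
      intro X; rw [← Matrix.mul_assoc, hU, Matrix.one_mul]
    simp only [Matrix.transpose_mul, Matrix.transpose_transpose, Matrix.diagonal_transpose,
      Matrix.mul_assoc]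
    rw [hUX, ← Matrix.mul_assoc (diagonal c) (diagonal e) Vᵀ, Matrix.diagonal_mul_diagonal]
  rw [h1, ← Matrix.mul_assoc, Matrix.trace_mul_cycle V _ Vᵀ, hV, Matrix.one_mul,
    Matrix.trace_diagonal]

/-- the singular value thresholding operator `D_τ(Y) = U Σ' Vᵀ`, with
`σ'_k = σ_k - τ` if `σ_k ≥ τ` and `σ'_k = 0` otherwise, is the unique minimizer of
`Z ↦ (1/2)‖Y - Z‖_F² + τ‖Z‖_*`. -/
theorem svt_is_unique_prox_of_nuclear_norm
    (n₁ n₂ k : ℕ) (Y : Matrix (Fin n₁) (Fin n₂) ℝ)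
    (U : Matrix (Fin n₁) (Fin k) ℝ) (V : Matrix (Fin n₂) (Fin k) ℝ) (σ : Fin k → ℝ) (τ : ℝ)
    (hτ : 0 < τ)
    -- SVD of Y: U, V have orthonormal columns, σ nonnegative and nonincreasing
    (hY : Y = U * Matrix.diagonal σ * Vᵀ) (hU : Uᵀ * U = 1) (hV : Vᵀ * V = 1)
    (hσ : ∀ i, 0 ≤ σ i) (hmono : ∀ i j : Fin k, i ≤ j → σ j ≤ σ i) :
    let D : Matrix (Fin n₁) (Fin n₂) ℝ :=
      U * Matrix.diagonal (fun i => if τ ≤ σ i then σ i - τ else 0) * Vᵀ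
    ∀ Z : Matrix (Fin n₁) (Fin n₂) ℝ, Z ≠ D →
      (1 / 2) * (frobNorm (Y - D)) ^ 2 + τ * nuclearNorm D
        < (1 / 2) * (frobNorm (Y - Z)) ^ 2 + τ * nuclearNorm Z := by
  intro D Z hZ
  classical
  set σ' : Fin k → ℝ := fun i => if τ ≤ σ i then σ i - τ else 0 with hσ'def
  set μ : Fin k → ℝ := fun i => σ i - σ' i with hμdef
  have hσ'nonneg : ∀ i, 0 ≤ σ' i := by
    intro i
    by_cases h : τ ≤ σ i
    · simp only [hσ'def, if_pos h]; linarith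
    · simp only [hσ'def, if_neg h]; exact le_refl 0
  have hμabs : ∀ i, |μ i| ≤ τ := by
    intro i
    rw [abs_le]
    by_cases h : τ ≤ σ i
    · simp only [hμdef, hσ'def, if_pos h]
      constructor <;> linarith
    · simp only [hμdef, hσ'def, if_neg h]
      constructor <;> [linarith [hσ i]; linarith [le_of_not_ge h]]
  have hμσ' : ∀ i, μ i * σ' i = τ * σ' i := by
    intro i
    by_cases h : τ ≤ σ i
    · simp only [hμdef, hσ'def, if_pos h]; ring
    · simp only [hμdef, hσ'def, if_neg h]; ring
  have hDeq : D = U * Matrix.diagonal σ' * Vᵀ := rfl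
  have hWeq : Y - D = U * Matrix.diagonal μ * Vᵀ := by
    rw [hY, hDeq, ← Matrix.sub_mul, ← Matrix.mul_sub, Matrix.diagonal_sub]
  -- key inequalities
  have hWZ : ∑ i, ∑ j, (Y - D) i j * Z i j ≤ τ * nuclearNorm Z := by
    refine inner_le_nuclear (Y - D) Z τ hτ.le fun x => ?_
    rw [hWeq]
    exact SVTAux.mulVec_sq_le hU hV μ τ hμabs x
  have hWD : ∑ i, ∑ j, (Y - D) i j * D i j = τ * ∑ i, σ' i := by
    rw [hWeq]
    show ∑ i, ∑ j, (U * Matrix.diagonal μ * Vᵀ) i j * (U * Matrix.diagonal σ' * Vᵀ) i j = _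
    rw [inner_UDV hU hV μ σ', Finset.mul_sum]
    exact Finset.sum_congr rfl fun i _ => hμσ' i
  have hnucD : nuclearNorm D ≤ ∑ i, σ' i := nuclear_le_sum hU hV σ' hσ'nonneg
  -- positivity
  have hpos : 0 < ∑ i, ∑ j, ((Z - D) i j) ^ 2 := by
    have hne : ∃ i j, Z i j ≠ D i j := by
      by_contra h
      push_neg at h
      exact hZ (by ext i j; exact h i j)
    obtain ⟨i0, j0, hij⟩ := hne
    have h1 : 0 < ∑ j, ((Z - D) i0 j) ^ 2 := by
      refine Finset.sum_pos' (fun j _ => sq_nonneg _) ⟨j0, Finset.mem_univ _, ?_⟩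
      have : (Z - D) i0 j0 ≠ 0 := by
        simp only [Matrix.sub_apply]
        exact sub_ne_zero_of_ne hij
      positivity
    refine Finset.sum_pos' (fun i _ => Finset.sum_nonneg fun j _ => sq_nonneg _)
      ⟨i0, Finset.mem_univ _, h1⟩
  -- quadratic expansion
  have hfrob : ∀ A : Matrix (Fin n₁) (Fin n₂) ℝ,
      frobNorm A ^ 2 = ∑ i, ∑ j, (A i j) ^ 2 := by
    intro A
    rw [frobNorm, Real.sq_sqrt]
    exact Finset.sum_nonneg fun i _ => Finset.sum_nonneg fun j _ => sq_nonneg _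
  have hsplit : Y - Z = (Y - D) - (Z - D) := by abel
  have hexp : frobNorm (Y - Z) ^ 2
      = frobNorm (Y - D) ^ 2 - 2 * (∑ i, ∑ j, (Y - D) i j * (Z - D) i j)
        + ∑ i, ∑ j, ((Z - D) i j) ^ 2 := by
    rw [hfrob, hfrob, hsplit]
    have hpt : ∀ (i : Fin n₁) (j : Fin n₂), ((Y - D) - (Z - D)) i j ^ 2
        = (Y - D) i j ^ 2 - 2 * ((Y - D) i j * (Z - D) i j) + (Z - D) i j ^ 2 := by
      intro i j; simp only [Matrix.sub_apply]; ring
    simp only [hpt, Finset.sum_add_distrib, Finset.sum_sub_distrib, ← Finset.mul_sum]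
  have hbil : ∑ i, ∑ j, (Y - D) i j * (Z - D) i j
      = (∑ i, ∑ j, (Y - D) i j * Z i j) - ∑ i, ∑ j, (Y - D) i j * D i j := by
    simp only [Matrix.sub_apply, mul_sub, Finset.sum_sub_distrib]
  have hτnucD : τ * nuclearNorm D ≤ τ * ∑ i, σ' i :=
    mul_le_mul_of_nonneg_left hnucD hτ.le
  rw [hexp]
  have hkey : ∑ i, ∑ j, (Y - D) i j * (Z - D) i j
      ≤ τ * nuclearNorm Z - τ * nuclearNorm D := by
    rw [hbil, hWD]
    linarith
  linarith
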